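/- Let P be a finite poset with n elements. The Lebesgue measure (n-dimensional volume) of the order polytope Δ(P) ⊆ ℝ^P equals e(P)/n!, where e(P) is the number of linear extensions of P. -/

import Mathlib

open MeasureTheory ENNReal

/-- The order polytope of a finite poset `P`. -/
def orderPolytope (P : Type*) [PartialOrder P] : Set (P → ℝ) :=
  {x | (∀ u : P, 0 ≤ x u ∧ x u ≤ 1) ∧ ∀ u v : P, u ≤ v → x u ≤ x v}

namespace OrderPolytopeAux

variable {P : Type*} [Fintype P]

/-- The unit cube in `P → ℝ`. -/
def cube (P : Type*) [Fintype P] : Set (P → ℝ) := Set.univ.pi fun _ => Set.Icc (0:ℝ) 1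

/-- The simplex of points in the cube sorted along `g`. -/
def sorted (g : P ≃ Fin (Fintype.card P)) : Set (P → ℝ) :=
  cube P ∩ {x | ∀ i j : Fin (Fintype.card P), i ≤ j → x (g.symm i) ≤ x (g.symm j)}

lemma measurableSet_sorted (g : P ≃ Fin (Fintype.card P)) : MeasurableSet (sorted g) := by
  apply MeasurableSet.inter
  · exact MeasurableSet.univ_pi fun _ => measurableSet_Icc
  · have : {x : P → ℝ | ∀ i j : Fin (Fintype.card P), i ≤ j → x (g.symm i) ≤ x (g.symm j)}
        = ⋂ (i) (j) (_ : i ≤ j), {x : P → ℝ | x (g.symm i) ≤ x (g.symm j)} := by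
      ext x; simp [Set.mem_iInter]
    rw [this]
    exact MeasurableSet.iInter fun i => MeasurableSet.iInter fun j =>
      MeasurableSet.iInter fun _ =>
        measurableSet_le (measurable_pi_apply _) (measurable_pi_apply _)

/-- The set of non-injective points, a null set. -/
def badSet (P : Type*) [Fintype P] : Set (P → ℝ) := {x | ¬ Function.Injective x}

lemma volume_eqset (u v : P) (h : u ≠ v) : volume {x : P → ℝ | x u = x v} = 0 := by
  classical
  have hset : {x : P → ℝ | x u = x v} =
      (LinearMap.ker ((LinearMap.proj u : (P → ℝ) →ₗ[ℝ] ℝ) - LinearMap.proj v) :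
        Submodule ℝ (P → ℝ)) := by
    ext x
    simp [LinearMap.mem_ker, sub_eq_zero]
  rw [hset]
  refine Measure.addHaar_submodule _ _ ?_
  intro htop
  have h1 : (Pi.single u 1 : P → ℝ) ∈
      LinearMap.ker ((LinearMap.proj u : (P → ℝ) →ₗ[ℝ] ℝ) - LinearMap.proj v) := by
    rw [htop]; trivial
  simp [LinearMap.mem_ker, sub_eq_zero, Pi.single_eq_same,
    Pi.single_eq_of_ne (Ne.symm h)] at h1

lemma volume_badSet : volume (badSet P) = 0 := by
  have hsub : badSet P = ⋃ (u : P) (v : P) (_ : u ≠ v), {x : P → ℝ | x u = x v} := by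
    ext x
    simp only [badSet, Set.mem_setOf_eq, Function.Injective, not_forall, Set.mem_iUnion]
    constructor
    · rintro ⟨u, v, hxy, huv⟩; exact ⟨u, v, huv, hxy⟩
    · rintro ⟨u, v, huv, hxy⟩; exact ⟨u, v, hxy, huv⟩
  rw [hsub]
  refine measure_iUnion_null fun u => measure_iUnion_null fun v => measure_iUnion_null fun h =>
    volume_eqset u v h

lemma volume_sorted_eq (g g' : P ≃ Fin (Fintype.card P)) :
    volume (sorted g) = volume (sorted g') := by
  symm
  let e : P ≃ P := g.trans g'.symm
  let φ := MeasurableEquiv.piCongrLeft (fun _ : P => ℝ) e.symm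
  have hφ : ∀ (x : P → ℝ) (u : P), φ x u = x (e u) := by
    intro x u
    have h2 := MeasurableEquiv.piCongrLeft_apply_apply e.symm (β := fun _ : P => ℝ) x (e u)
    simpa using h2
  have hpre : φ ⁻¹' (sorted g) = sorted g' := by
    ext x
    simp only [sorted, cube, Set.mem_preimage, Set.mem_inter_iff, Set.mem_pi, Set.mem_univ,
      forall_true_left, Set.mem_setOf_eq, hφ]
    constructor
    · rintro ⟨h1, h2⟩
      refine ⟨fun u => by simpa using h1 (e.symm u), fun i j hij => ?_⟩
      have := h2 i j hij
      simpa [e] using this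
    · rintro ⟨h1, h2⟩
      refine ⟨fun u => h1 (e u), fun i j hij => ?_⟩
      have := h2 i j hij
      simpa [e] using this
  calc volume (sorted g') = volume (φ ⁻¹' (sorted g)) := by rw [hpre]
    _ = volume (sorted g) :=
        (volume_measurePreserving_piCongrLeft (fun _ : P => ℝ) e.symm).measure_preimage
          (measurableSet_sorted g).nullMeasurableSet

/-- Sorting an injective vector yields a bijection along which it is monotone. -/
lemma exists_sorted (x : P → ℝ) (hx : Function.Injective x) :
    ∃ g : P ≃ Fin (Fintype.card P), (∀ u v : P, x u < x v ↔ g u < g v) ∧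
      ∀ i j : Fin (Fintype.card P), i ≤ j → x (g.symm i) ≤ x (g.symm j) := by
  letI : LinearOrder P := LinearOrder.lift' x hx
  have hle : ∀ a b : P, a ≤ b ↔ x a ≤ x b := fun a b => Iff.rfl
  have hlt : ∀ a b : P, a < b ↔ x a < x b := by
    intro a b
    rw [lt_iff_le_not_ge, lt_iff_le_not_ge, hle, hle]
  let e : Fin (Fintype.card P) ≃o P := monoEquivOfFin P rfl
  refine ⟨e.symm.toEquiv, fun u v => ?_, fun i j hij => ?_⟩
  · exact (hlt u v).symm.trans (OrderIso.lt_iff_lt e.symm).symm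
  · have : e i ≤ e j := e.monotone hij
    rw [hle] at this
    simpa using this

lemma sorted_inter_subset {g g' : P ≃ Fin (Fintype.card P)} (h : g ≠ g') :
    sorted g ∩ sorted g' ⊆ badSet P := by
  rintro x ⟨⟨_, hg⟩, ⟨_, hg'⟩⟩
  by_contra hbad
  simp only [badSet, Set.mem_setOf_eq, not_not] at hbad
  apply h
  have key : ∀ (h : P ≃ Fin (Fintype.card P)),
      (∀ i j : Fin (Fintype.card P), i ≤ j → x (h.symm i) ≤ x (h.symm j)) →
      ∀ u v : P, h u < h v → x u < x v := by
    intro h hs u v huv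
    have h1 : x (h.symm (h u)) ≤ x (h.symm (h v)) := hs _ _ huv.le
    simp only [Equiv.symm_apply_apply] at h1
    refine lt_of_le_of_ne h1 fun he => ?_
    exact absurd (congrArg h (hbad he)) huv.ne
  -- the permutation `g'.symm.trans g`?  we compare g and g'
  have hmono : StrictMono (fun i => g' (g.symm i)) := by
    intro i j hij
    have hx1 : x (g.symm i) < x (g.symm j) := by
      apply key g hg
      simpa using hij
    rcases lt_trichotomy (g' (g.symm i)) (g' (g.symm j)) with hlt | heq | hgt
    · exact hlt
    · exact absurd (congrArg x (g'.injective heq)) hx1.ne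
    · exact absurd (key g' hg' _ _ hgt) (asymm hx1)
  have hsurj : Function.Surjective (fun i => g' (g.symm i)) :=
    (g.symm.trans g').surjective
  let ψ : Fin (Fintype.card P) ≃o Fin (Fintype.card P) :=
    StrictMono.orderIsoOfSurjective _ hmono hsurj
  have hψ : ψ = OrderIso.refl _ := Subsingleton.elim _ _
  ext u
  have : ψ (g u) = g' (g.symm (g u)) := rfl
  rw [hψ] at this
  have h3 : g u = g' u := by simpa using this
  exact congrArg Fin.val h3

lemma volume_cube : volume (cube P) = 1 := by
  rw [cube, volume_pi_pi]
  simp [Real.volume_Icc]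

lemma volume_sorted (g : P ≃ Fin (Fintype.card P)) :
    volume (sorted g) = 1 / (Nat.factorial (Fintype.card P) : ℝ≥0∞) := by
  classical
  have hdisj : Pairwise (Function.onFun (AEDisjoint volume) fun g' : P ≃ Fin (Fintype.card P) => sorted g') :=
    fun g1 g2 hne => measure_mono_null (sorted_inter_subset hne) volume_badSet
  have hsum : volume (⋃ g' : P ≃ Fin (Fintype.card P), sorted g')
      = ∑' g' : P ≃ Fin (Fintype.card P), volume (sorted g') :=
    measure_iUnion₀ hdisj fun g' => (measurableSet_sorted g').nullMeasurableSet
  have hUcube : volume (⋃ g' : P ≃ Fin (Fintype.card P), sorted g') = 1 := by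
    apply le_antisymm
    · calc volume (⋃ g' : P ≃ Fin (Fintype.card P), sorted g') ≤ volume (cube P) := by
            refine measure_mono (Set.iUnion_subset fun g' => ?_)
            exact Set.inter_subset_left
        _ = 1 := volume_cube
    · have hcover : cube P ⊆ badSet P ∪ ⋃ g' : P ≃ Fin (Fintype.card P), sorted g' := by
        intro x hx
        by_cases hinj : Function.Injective x
        · right
          obtain ⟨g', _, hsort⟩ := exists_sorted x hinj
          exact Set.mem_iUnion.2 ⟨g', hx, hsort⟩
        · left; exact hinj
      calc (1 : ℝ≥0∞) = volume (cube P) := volume_cube.symm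
        _ ≤ volume (badSet P ∪ ⋃ g' : P ≃ Fin (Fintype.card P), sorted g') :=
            measure_mono hcover
        _ ≤ volume (badSet P) + volume (⋃ g' : P ≃ Fin (Fintype.card P), sorted g') :=
            measure_union_le _ _
        _ = volume (⋃ g' : P ≃ Fin (Fintype.card P), sorted g') := by
            rw [volume_badSet, zero_add]
  have hconst : ∀ g' : P ≃ Fin (Fintype.card P), volume (sorted g') = volume (sorted g) :=
    fun g' => volume_sorted_eq g' g
  rw [hsum] at hUcube
  rw [tsum_fintype] at hUcube
  simp only [hconst] at hUcube
  rw [Finset.sum_const, Finset.card_univ, Fintype.card_equiv (g)] at hUcube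
  have hne : (Nat.factorial (Fintype.card P) : ℝ≥0∞) ≠ 0 := by
    exact_mod_cast Nat.cast_ne_zero.2 (Nat.factorial_ne_zero _)
  have htop : (Nat.factorial (Fintype.card P) : ℝ≥0∞) ≠ ⊤ := natCast_ne_top _
  rw [ENNReal.eq_div_iff hne htop]
  rw [← hUcube, nsmul_eq_mul]

end OrderPolytopeAux

open OrderPolytopeAux in
/-- The Lebesgue measure of the order polytope `Δ(P) ⊆ ℝ^P` of a finite poset `P`
with `n` elements equals `e(P)/n!`, where `e(P)` is the number of linear extensions
of `P`, i.e. of bijections `g : P ≃ Fin n` with `u < v → g u < g v`. -/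
theorem volume_orderPolytope (P : Type*) [PartialOrder P] [Fintype P] :
    volume (orderPolytope P) =
      (Nat.card {g : P ≃ Fin (Fintype.card P) // ∀ u v : P, u < v → g u < g v} : ℝ≥0∞) /
        (Nat.factorial (Fintype.card P) : ℝ≥0∞) := by
  classical
  set LE := {g : P ≃ Fin (Fintype.card P) // ∀ u v : P, u < v → g u < g v} with hLE
  have : Fintype LE := Fintype.ofFinite _
  -- each sorted simplex of a linear extension sits inside the polytope
  have hsub : ∀ g : LE, sorted g.1 ⊆ orderPolytope P := by
    rintro g x ⟨hcube, hsort⟩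
    refine ⟨fun u => hcube u (Set.mem_univ u), fun u v huv => ?_⟩
    rcases eq_or_lt_of_le huv with rfl | hlt
    · exact le_refl _
    · have h1 : g.1 u < g.1 v := g.2 u v hlt
      have h2 : x (g.1.symm (g.1 u)) ≤ x (g.1.symm (g.1 v)) := hsort _ _ h1.le
      simpa using h2
  have hsup : orderPolytope P ⊆ badSet P ∪ ⋃ g : LE, sorted g.1 := by
    intro x hx
    by_cases hinj : Function.Injective x
    · right
      obtain ⟨g, hiff, hsort⟩ := exists_sorted x hinj
      have hgle : ∀ u v : P, u < v → g u < g v := by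
        intro u v huv
        refine (hiff u v).1 (lt_of_le_of_ne (hx.2 u v huv.le) fun he => huv.ne (hinj he))
      have hcube : x ∈ cube P := fun u _ => ⟨(hx.1 u).1, (hx.1 u).2⟩
      exact Set.mem_iUnion.2 ⟨⟨g, hgle⟩, hcube, hsort⟩
    · left; exact hinj
  have hdisj : Pairwise (Function.onFun (AEDisjoint volume) fun g : LE => sorted g.1) := by
    intro g1 g2 hne
    exact measure_mono_null (sorted_inter_subset (fun h => hne (Subtype.ext h))) volume_badSet
  have hU : volume (⋃ g : LE, sorted g.1) = ∑' g : LE, volume (sorted g.1) :=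
    measure_iUnion₀ hdisj fun g => (measurableSet_sorted g.1).nullMeasurableSet
  have hval : volume (orderPolytope P) = volume (⋃ g : LE, sorted g.1) := by
    apply le_antisymm
    · calc volume (orderPolytope P)
          ≤ volume (badSet P ∪ ⋃ g : LE, sorted g.1) := measure_mono hsup
        _ ≤ volume (badSet P) + volume (⋃ g : LE, sorted g.1) := measure_union_le _ _
        _ = volume (⋃ g : LE, sorted g.1) := by rw [volume_badSet, zero_add]
    · exact measure_mono (Set.iUnion_subset hsub)
  rw [hval, hU]
  rw [tsum_fintype]
  simp only [volume_sorted]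
  rw [Finset.sum_const, Finset.card_univ, nsmul_eq_mul, Nat.card_eq_fintype_card, mul_one_div]
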